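/- Let h be a natural number, let U be a finite rooted tree, and let v be a vertex of U of depth h. Then for any two Boolean lists ℓ and ℓ' of length h, |{α ∈ Inj(U, M_h) : α(v) = ℓ}| = |{α ∈ Inj(U, M_h) : α(v) = ℓ'}|; that is, for uniformly chosen α ∈ Inj(U, M_h) (when this set is nonempty), the image α(v) is uniformly distributed over the 2^h leaves of M_h. -/

import Mathlib

attribute [local instance] Classical.propDecidable

/-- A finite rooted tree, encoded by a parent function together with a depth
function recording the graph distance to the root. -/
structure FiniteRootedTree where
  V : Type
  fintypeV : Fintype V
  root : V
  parent : V → V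
  depth : V → ℕ
  depth_root : depth root = 0
  depth_parent : ∀ v, v ≠ root → depth v = depth (parent v) + 1
  root_of_depth_zero : ∀ v, depth v = 0 → v = root

attribute [instance] FiniteRootedTree.fintypeV

namespace FiniteRootedTree

/-- `u` is a child of `v`. -/
def IsChild (T : FiniteRootedTree) (u v : T.V) : Prop :=
  u ≠ T.root ∧ T.parent u = v

/-- The number of children of `v`. -/
noncomputable def numChildren (T : FiniteRootedTree) (v : T.V) : ℕ :=
  Set.ncard {u : T.V | T.IsChild u v}

/-- A leaf is a vertex with no children. -/
def IsLeaf (T : FiniteRootedTree) (v : T.V) : Prop :=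
  ∀ u, ¬ T.IsChild u v

/-- The finset of leaves of `T`. -/
noncomputable def leaves (T : FiniteRootedTree) : Finset T.V :=
  Finset.univ.filter fun v => T.IsLeaf v

/-- Probability that the random root-to-leaf walk ends at the leaf `l`:
the product of `1 / c(v)` over the vertices `v ≠ l` on the root-to-`l` path
(equivalently, over the strict ancestors `parent^[k+1] l` of `l`). -/
noncomputable def leafProb (T : FiniteRootedTree) (l : T.V) : ℝ :=
  ∏ k ∈ Finset.range (T.depth l), (1 : ℝ) / (T.numChildren (T.parent^[k + 1] l))

/-- The expected length of the random root-to-leaf walk in `T`. -/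
noncomputable def g (T : FiniteRootedTree) : ℝ :=
  ∑ l ∈ T.leaves, (T.depth l : ℝ) * T.leafProb l

/-- The number of vertices of the subtree of `T` rooted at `v`, i.e. the number
of vertices `u` having `v` as an ancestor (including `v` itself). -/
noncomputable def subtreeSize (T : FiniteRootedTree) (v : T.V) : ℕ :=
  Set.ncard {u : T.V | ∃ k : ℕ, T.parent^[k] u = v}

end FiniteRootedTree

/-- The truncations of `T₁` and `T₂` at level `h` (the rooted trees induced on
the vertices of depth at most `h`) are isomorphic as rooted trees. -/
def TruncIso (T₁ T₂ : FiniteRootedTree) (h : ℕ) : Prop :=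
  ∃ φ : {v : T₁.V // T₁.depth v ≤ h} ≃ {v : T₂.V // T₂.depth v ≤ h},
    (φ ⟨T₁.root, by simp [T₁.depth_root]⟩).val = T₂.root ∧
    ∀ u u' : {v : T₁.V // T₁.depth v ≤ h},
      T₁.IsChild u'.val u.val ↔ T₂.IsChild (φ u').val (φ u).val

/-- `InjM h U` is the set of root-respecting injective homomorphisms from the
rooted tree `U` into the complete binary tree `M_h`, whose vertices are the
boolean lists of length at most `h`, rooted at the empty list, with the
children of a list being its two one-element extensions. -/
def InjM (h : ℕ) (U : FiniteRootedTree) : Set (U.V → List Bool) :=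
  {α | Function.Injective α ∧ (∀ u, (α u).length ≤ h) ∧ α U.root = [] ∧
    ∀ u u' : U.V, U.IsChild u' u → ∃ b : Bool, α u' = α u ++ [b]}

private lemma xor_zip_invol : ∀ (s m : List Bool), s.length ≤ m.length →
    List.zipWith xor (List.zipWith xor s m) m = s
  | [], _, _ => by simp
  | a :: s, b :: m, h => by
      simp [xor_zip_invol s m (by simpa using h), Bool.xor_assoc]
  | _ :: _, [], h => by simp at h

private lemma xor_zip_append : ∀ (s m : List Bool) (b : Bool), s.length < m.length →
    ∃ b', List.zipWith xor (s ++ [b]) m = List.zipWith xor s m ++ [b']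
  | [], c :: m, b, _ => ⟨xor b c, by simp⟩
  | a :: s, c :: m, b, h => by
      obtain ⟨b', hb'⟩ := xor_zip_append s m b (by simpa using h)
      exact ⟨b', by simp [hb']⟩
  | _, [], _, h => by simp at h

private lemma xor_zip_self : ∀ (l l' : List Bool), l.length = l'.length →
    List.zipWith xor l (List.zipWith xor l l') = l'
  | [], [], _ => rfl
  | a :: l, b :: l', h => by
      simp [xor_zip_self l l' (by simpa using h), ← Bool.xor_assoc]
  | [], _ :: _, h => by simp at h
  | _ :: _, [], h => by simp at h

private lemma xor_zip_self' : ∀ (l l' : List Bool), l.length = l'.length →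
    List.zipWith xor l' (List.zipWith xor l l') = l
  | [], [], _ => rfl
  | a :: l, b :: l', h => by
      simp only [List.zipWith_cons_cons, xor_zip_self' l l' (by simpa using h)]
      congr 1
      cases a <;> cases b <;> rfl
  | [], _ :: _, h => by simp at h
  | _ :: _, [], h => by simp at h

/-- the image of a depth-`h` vertex under a uniform injective
homomorphism into `M_h` is uniformly distributed over the leaves of `M_h`. -/
theorem stmt_6 (h : ℕ) (U : FiniteRootedTree) (v : U.V) (hv : U.depth v = h)
    (l l' : List Bool) (hl : l.length = h) (hl' : l'.length = h) :
    Set.ncard {α ∈ InjM h U | α v = l} = Set.ncard {α ∈ InjM h U | α v = l'} := by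
  classical
  set m : List Bool := List.zipWith xor l l' with hm
  have hml : m.length = h := by simp [hm, hl, hl']
  set F : (U.V → List Bool) → (U.V → List Bool) :=
    fun α u => List.zipWith xor (α u) m with hF
  -- F maps InjM to InjM
  have hFinj : ∀ α ∈ InjM h U, F α ∈ InjM h U := by
    rintro α ⟨hinj, hlen, hroot, hchild⟩
    refine ⟨?_, ?_, ?_, ?_⟩
    · intro u u' huu
      apply hinj
      have := congrArg (fun s => List.zipWith xor s m) huu
      simpa [hF, xor_zip_invol _ m ((hlen u).trans_eq hml.symm),
        xor_zip_invol _ m ((hlen u').trans_eq hml.symm)] using this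
    · intro u
      simp only [hF, List.length_zipWith]
      exact le_trans (min_le_left _ _) (hlen u)
    · simp [hF, hroot]
    · intro u u' hc
      obtain ⟨b, hb⟩ := hchild u u' hc
      have hlt : (α u).length < m.length := by
        have := hlen u'
        rw [hb] at this
        simp at this
        omega
      obtain ⟨b', hb'⟩ := xor_zip_append (α u) m b hlt
      exact ⟨b', by simp [hF, hb, hb']⟩
  -- F is an involution on InjM
  have hFF : ∀ α ∈ InjM h U, F (F α) = α := by
    rintro α ⟨_, hlen, _, _⟩
    funext u
    exact xor_zip_invol (α u) m ((hlen u).trans_eq hml.symm)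
  have hFl : List.zipWith xor l m = l' := xor_zip_self l l' (by omega)
  have hFl' : List.zipWith xor l' m = l := xor_zip_self' l l' (by omega)
  have himg : F '' {α ∈ InjM h U | α v = l} = {α ∈ InjM h U | α v = l'} := by
    ext β
    constructor
    · rintro ⟨α, ⟨hα, hαv⟩, rfl⟩
      exact ⟨hFinj α hα, by simp [hF, hαv, hFl]⟩
    · rintro ⟨hβ, hβv⟩
      exact ⟨F β, ⟨hFinj β hβ, by simp [hF, hβv, hFl']⟩, hFF β hβ⟩
  have hinjOn : Set.InjOn F {α ∈ InjM h U | α v = l} := by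
    rintro α ⟨hα, _⟩ β ⟨hβ, _⟩ hαβ
    rw [← hFF α hα, hαβ, hFF β hβ]
  rw [← himg, Set.ncard_image_of_injOn hinjOn]
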